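/- For every x with |x| > 1, the function y ↦ U(x,y)/(y−1)^{αρ} tends to v₁(x)/c_{αρ} as y → 1 from the right. -/

import Mathlib

open Real MeasureTheory Set Filter intervalIntegral
open scoped Topology

/-- `ψ_{αρ}(u) = (u−1)^{αρ̂−1}(u+1)^{αρ−1}` where `ρ̂ = 1 − ρ`. -/
noncomputable def psiRho (α ρ : ℝ) (u : ℝ) : ℝ :=
  (u - 1) ^ (α * (1 - ρ) - 1) * (u + 1) ^ (α * ρ - 1)

/-- `ψ_{αρ̂}(u) = (u−1)^{αρ−1}(u+1)^{αρ̂−1}` where `ρ̂ = 1 − ρ`. -/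
noncomputable def psiRhoHat (α ρ : ℝ) (u : ℝ) : ℝ :=
  (u - 1) ^ (α * ρ - 1) * (u + 1) ^ (α * (1 - ρ) - 1)

/-- `g(y) = (y−1)^{αρ}(y+1)^{αρ̂−1}`. -/
noncomputable def gfun (α ρ : ℝ) (y : ℝ) : ℝ :=
  (y - 1) ^ (α * ρ) * (y + 1) ^ (α * (1 - ρ) - 1)

/-- `z(x,y) = |xy−1|/|x−y|`. -/
noncomputable def zfun (x y : ℝ) : ℝ := |x * y - 1| / |x - y|

/-- `c_{αρ} = 2^{αρ}·π·αρ·Γ(αρ)/Γ(1−αρ̂)`. -/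
noncomputable def cRho (α ρ : ℝ) : ℝ :=
  2 ^ (α * ρ) * π * (α * ρ) * Real.Gamma (α * ρ) / Real.Gamma (1 - α * (1 - ρ))

/-- The harmonic function `v₁` (defined piecewise for `x > 1` and `x < −1`). -/
noncomputable def v1fun (α ρ : ℝ) (x : ℝ) : ℝ :=
  if 1 < x then
    Real.sin (π * (α * (1 - ρ))) *
      ((x + 1) * psiRho α ρ x - max (α - 1) 0 * ∫ u in (1:ℝ)..x, psiRho α ρ u)
  else
    Real.sin (π * (α * ρ)) *
      ((|x| - 1) * psiRhoHat α ρ |x| - max (α - 1) 0 * ∫ u in (1:ℝ)..|x|, psiRhoHat α ρ u)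

/-- The explicit Profeta–Simon Green function `U(x,y)` (for `x > y > 1` resp. `x < −1 < 1 < y`). -/
noncomputable def Ufun (α ρ : ℝ) (x y : ℝ) : ℝ :=
  if 1 < x then
    (2 ^ (1 - α) / (Real.Gamma (α * ρ) * Real.Gamma (α * (1 - ρ)))) *
      ((x - y) ^ (α - 1) * (∫ u in (1:ℝ)..zfun x y, psiRhoHat α ρ u)
        - max (α - 1) 0 * (∫ u in (1:ℝ)..y, psiRhoHat α ρ u) * ∫ u in (1:ℝ)..x, psiRho α ρ u)
  else
    (Real.sin (π * (α * ρ)) / Real.sin (π * (α * (1 - ρ)))) *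
    (2 ^ (1 - α) / (Real.Gamma (α * ρ) * Real.Gamma (α * (1 - ρ)))) *
      ((y - x) ^ (α - 1) * (∫ u in (1:ℝ)..zfun x y, psiRhoHat α ρ u)
        - max (α - 1) 0 * (∫ u in (1:ℝ)..y, psiRhoHat α ρ u) * ∫ u in (1:ℝ)..|x|, psiRhoHat α ρ u)

private lemma my_intInt (p q : ℝ) (hp : 0 < p) {z : ℝ} (hz : 1 ≤ z) :
    IntervalIntegrable (fun u => (u-1)^(p-1)*(u+1)^q) volume 1 z := by
  have h1 : IntervalIntegrable (fun u : ℝ => (u-1)^(p-1)) volume 1 z := by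
    have := (intervalIntegrable_rpow' (a := 0) (b := z - 1) (r := p-1) (by linarith)).comp_sub_right 1
    simpa using this
  refine h1.mul_continuousOn ?_
  refine ContinuousOn.rpow_const (by fun_prop) fun u hu => Or.inl ?_
  rw [uIcc_of_le hz] at hu
  have := hu.1; positivity

private lemma my_intpow (p : ℝ) (hp : 0 < p) {z : ℝ} (hz : 1 ≤ z) :
    ∫ u in (1:ℝ)..z, (u-1)^(p-1) = (z-1)^p / p := by
  have h := intervalIntegral.integral_comp_sub_right (a := 1) (b := z) (fun u => u ^ (p-1)) 1
  rw [h, integral_rpow (Or.inl (by linarith : (-1:ℝ) < p - 1))]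
  norm_num
  rw [Real.zero_rpow (by linarith : p ≠ 0)]
  ring_nf

private lemma my_keyA (p q : ℝ) (hp : 0 < p) (hq : q < 0) :
    Tendsto (fun z : ℝ => (∫ u in (1:ℝ)..z, (u-1)^(p-1)*(u+1)^q) / (z-1)^p) (𝓝[>] 1)
      (𝓝 ((2:ℝ)^q / p)) := by
  have hlow : Tendsto (fun z : ℝ => (z+1)^q / p) (𝓝[>] 1) (𝓝 ((2:ℝ)^q / p)) := by
    have h1 : Tendsto (fun z : ℝ => z + 1) (𝓝 (1:ℝ)) (𝓝 2) := by
      have h0 : Tendsto (fun z : ℝ => z) (𝓝 (1:ℝ)) (𝓝 1) := tendsto_id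
      simpa [one_add_one_eq_two] using h0.add (tendsto_const_nhds (x := (1:ℝ)))
    exact ((h1.rpow_const (Or.inl two_ne_zero)).div_const p).mono_left nhdsWithin_le_nhds
  refine tendsto_of_tendsto_of_tendsto_of_le_of_le' hlow tendsto_const_nhds ?_ ?_
  · filter_upwards [self_mem_nhdsWithin] with z (hz : 1 < z)
    have hz1 : (0:ℝ) < z - 1 := by linarith
    have hii : IntervalIntegrable (fun u : ℝ => (z+1)^q * (u-1)^(p-1)) volume 1 z := by
      have := ((intervalIntegrable_rpow' (a := 0) (b := z - 1) (r := p-1)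
        (by linarith)).comp_sub_right 1).const_mul ((z+1)^q)
      simpa using this
    have hbound : ∫ u in (1:ℝ)..z, (z+1)^q * (u-1)^(p-1) ≤ ∫ u in (1:ℝ)..z, (u-1)^(p-1)*(u+1)^q := by
      apply intervalIntegral.integral_mono_on hz.le hii (my_intInt p q hp hz.le)
      intro u hu
      rw [mul_comm]
      apply mul_le_mul_of_nonneg_left _ (Real.rpow_nonneg (by linarith [hu.1]) _)
      exact Real.rpow_le_rpow_of_nonpos (by linarith [hu.1]) (by linarith [hu.2]) hq.le
    rw [intervalIntegral.integral_const_mul, my_intpow p hp hz.le] at hbound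
    rw [le_div_iff₀ (Real.rpow_pos_of_pos hz1 p)]
    calc (z+1)^q / p * (z-1)^p = (z+1)^q * ((z-1)^p / p) := by ring
    _ ≤ _ := hbound
  · filter_upwards [self_mem_nhdsWithin] with z (hz : 1 < z)
    have hz1 : (0:ℝ) < z - 1 := by linarith
    have hii : IntervalIntegrable (fun u : ℝ => (2:ℝ)^q * (u-1)^(p-1)) volume 1 z := by
      have := ((intervalIntegrable_rpow' (a := 0) (b := z - 1) (r := p-1)
        (by linarith)).comp_sub_right 1).const_mul ((2:ℝ)^q)
      simpa using this
    have hbound : ∫ u in (1:ℝ)..z, (u-1)^(p-1)*(u+1)^q ≤ ∫ u in (1:ℝ)..z, (2:ℝ)^q * (u-1)^(p-1) := by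
      apply intervalIntegral.integral_mono_on hz.le (my_intInt p q hp hz.le) hii
      intro u hu
      rw [mul_comm ((2:ℝ)^q)]
      apply mul_le_mul_of_nonneg_left _ (Real.rpow_nonneg (by linarith [hu.1]) _)
      exact Real.rpow_le_rpow_of_nonpos two_pos (by linarith [hu.1]) hq.le
    rw [intervalIntegral.integral_const_mul, my_intpow p hp hz.le] at hbound
    rw [div_le_iff₀ (Real.rpow_pos_of_pos hz1 p)]
    calc (∫ u in (1:ℝ)..z, (u-1)^(p-1)*(u+1)^q) ≤ (2:ℝ)^q * ((z-1)^p / p) := hbound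
    _ = (2:ℝ)^q / p * (z-1)^p := by ring

private lemma my_const (α ρ : ℝ) (hα0 : 0 < α) (hρ0 : 0 < ρ) (hρ1 : ρ < 1)
    (hαρh : α * (1 - ρ) < 1) :
    2^(1-α) / (Real.Gamma (α*ρ) * Real.Gamma (α*(1-ρ))) * ((2:ℝ)^(α*(1-ρ)-1) / (α*ρ))
      = Real.sin (π*(α*(1-ρ))) / cRho α ρ := by
  have hs0 : 0 < α * (1-ρ) := by nlinarith
  have hp0 : 0 < α * ρ := by nlinarith
  have hsin : 0 < Real.sin (π*(α*(1-ρ))) := by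
    apply Real.sin_pos_of_pos_of_lt_pi (mul_pos Real.pi_pos hs0)
    nlinarith [Real.pi_pos]
  have hG1 : 0 < Real.Gamma (α*ρ) := Real.Gamma_pos_of_pos hp0
  have hG2 : 0 < Real.Gamma (α*(1-ρ)) := Real.Gamma_pos_of_pos hs0
  have hG3 : 0 < Real.Gamma (1 - α*(1-ρ)) := Real.Gamma_pos_of_pos (by linarith)
  have hrefl : Real.Gamma (α*(1-ρ)) * Real.Gamma (1 - α*(1-ρ)) = π / Real.sin (π*(α*(1-ρ))) :=
    Real.Gamma_mul_Gamma_one_sub _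
  have h2 : (2:ℝ)^(1-α) * 2^(α*(1-ρ)-1) = ((2:ℝ)^(α*ρ))⁻¹ := by
    rw [← Real.rpow_add two_pos, ← Real.rpow_neg (by norm_num : (0:ℝ) ≤ 2)]
    congr 1; ring
  have h2p : (0:ℝ) < (2:ℝ)^(α*ρ) := Real.rpow_pos_of_pos two_pos _
  have hGs := hG1.ne'
  have hGs2 := hG2.ne'
  have hGs3 := hG3.ne'
  have hsn := hsin.ne'
  have hpn := hp0.ne'
  have h2pn := h2p.ne'
  have hπ := Real.pi_ne_zero
  rw [cRho]
  field_simp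
  have h2' : (2:ℝ)^(1-α) * 2^(α*(1-ρ)-1) * 2^(α*ρ) = 1 := by
    rw [h2, inv_mul_cancel₀ h2pn]
  have key : Real.sin (π*(α*(1-ρ))) * (Real.Gamma (α*(1-ρ)) * Real.Gamma (1 - α*(1-ρ))) = π := by
    rw [hrefl, mul_div_assoc', mul_div_right_comm, div_self hsn, one_mul]
  rw [mul_comm (α * (1 - ρ)) π]
  linear_combination π*h2' - key
set_option maxHeartbeats 1000000 in
/-- Corollary 3.2: `U(x,y)/(y−1)^{αρ} → v₁(x)/c_{αρ}` as `y → 1⁺`, for every `|x| > 1`. -/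
theorem stmt_3 (α ρ : ℝ) (hα0 : 0 < α) (hα2 : α < 2) (hρ0 : 0 < ρ) (hρ1 : ρ < 1)
    (hαρ : α * ρ < 1) (hαρh : α * (1 - ρ) < 1)
    (x : ℝ) (hx : 1 < |x|) :
    Tendsto (fun y : ℝ => Ufun α ρ x y / (y - 1) ^ (α * ρ))
      (𝓝[>] (1:ℝ)) (𝓝 (v1fun α ρ x / cRho α ρ)) := by
  have hp0 : 0 < α * ρ := by nlinarith
  have hs0 : 0 < α * (1-ρ) := by nlinarith
  have hq : α * (1-ρ) - 1 < 0 := by linarith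
  have hG : Tendsto (fun y : ℝ => (∫ u in (1:ℝ)..y, psiRhoHat α ρ u) / (y-1)^(α*ρ)) (𝓝[>] 1)
      (𝓝 ((2:ℝ)^(α*(1-ρ)-1) / (α*ρ))) := by
    simpa [psiRhoHat] using my_keyA (α*ρ) (α*(1-ρ)-1) hp0 hq
  set M : ℝ := max (α-1) 0 with hM
  set L : ℝ := (2:ℝ)^(α*(1-ρ)-1) / (α*ρ) with hL
  set C : ℝ := 2^(1-α) / (Real.Gamma (α*ρ) * Real.Gamma (α*(1-ρ))) with hC
  rcases lt_abs.mp hx with hx1 | hx1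
  · -- case 1 < x
    set K : ℝ := ∫ u in (1:ℝ)..x, psiRho α ρ u with hK
    have hmem : Ioo (1:ℝ) x ∈ 𝓝[>] (1:ℝ) := Ioo_mem_nhdsGT_of_mem ⟨le_refl 1, hx1⟩
    have hzeq : ∀ y ∈ Ioo (1:ℝ) x, zfun x y = 1 + (y-1)*((x+1)/(x-y)) := by
      rintro y ⟨hy1, hyx⟩
      have h1 : 0 < x*y - 1 := by nlinarith
      have h2 : 0 < x - y := by linarith
      rw [zfun, abs_of_pos h1, abs_of_pos h2]
      field_simp
      ring
    have hzt : Tendsto (fun y => zfun x y) (𝓝[>] (1:ℝ)) (𝓝[>] (1:ℝ)) := by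
      rw [tendsto_nhdsWithin_iff]
      constructor
      · have base : Tendsto (fun y : ℝ => 1 + (y-1)*((x+1)/(x-y))) (𝓝[>] (1:ℝ)) (𝓝 1) := by
          have t1 : Tendsto (fun y : ℝ => y - 1) (𝓝 (1:ℝ)) (𝓝 0) := by
            have h0 : Tendsto (fun y : ℝ => y) (𝓝 (1:ℝ)) (𝓝 1) := tendsto_id
            simpa using h0.sub (tendsto_const_nhds (x := (1:ℝ)))
          have t2 : Tendsto (fun y : ℝ => (x+1)/(x-y)) (𝓝 (1:ℝ)) (𝓝 ((x+1)/(x-1))) := by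
            have h0 : Tendsto (fun y : ℝ => x - y) (𝓝 (1:ℝ)) (𝓝 (x-1)) :=
              tendsto_const_nhds.sub tendsto_id
            exact tendsto_const_nhds.div h0 (by linarith)
          have := (t1.mul t2).const_add (1:ℝ)
          simpa using this.mono_left nhdsWithin_le_nhds
        refine base.congr' ?_
        filter_upwards [hmem] with y hy
        exact (hzeq y hy).symm
      · filter_upwards [hmem] with y hy
        rw [hzeq y hy]
        have h2 : 0 < x - y := by linarith [hy.2]
        have h3 : 0 < (y-1)*((x+1)/(x-y)) := by
          apply mul_pos (by linarith [hy.1])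
          apply div_pos (by linarith) h2
        show (1:ℝ) < 1 + (y-1)*((x+1)/(x-y))
        linarith
    have hF : Tendsto (fun y : ℝ =>
        (∫ u in (1:ℝ)..zfun x y, psiRhoHat α ρ u) / (zfun x y - 1)^(α*ρ)) (𝓝[>] (1:ℝ)) (𝓝 L) :=
      hG.comp hzt
    have hA : Tendsto (fun y : ℝ => (x-y)^(α-1)) (𝓝[>] (1:ℝ)) (𝓝 ((x-1)^(α-1))) := by
      have h0 : Tendsto (fun y : ℝ => x - y) (𝓝 (1:ℝ)) (𝓝 (x-1)) :=
        tendsto_const_nhds.sub tendsto_id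
      exact (h0.rpow_const (Or.inl (by linarith))).mono_left nhdsWithin_le_nhds
    have hR : Tendsto (fun y : ℝ => ((x+1)/(x-y))^(α*ρ)) (𝓝[>] (1:ℝ))
        (𝓝 (((x+1)/(x-1))^(α*ρ))) := by
      have h0 : Tendsto (fun y : ℝ => x - y) (𝓝 (1:ℝ)) (𝓝 (x-1)) :=
        tendsto_const_nhds.sub tendsto_id
      have h1 : Tendsto (fun y : ℝ => (x+1)/(x-y)) (𝓝 (1:ℝ)) (𝓝 ((x+1)/(x-1))) :=
        tendsto_const_nhds.div h0 (by linarith)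
      have hne : (x+1)/(x-1) ≠ 0 := by
        apply ne_of_gt; apply div_pos (by linarith) (by linarith)
      exact (h1.rpow_const (Or.inl hne)).mono_left nhdsWithin_le_nhds
    have hNice : Tendsto (fun y : ℝ => C * ((x-y)^(α-1) *
        ((∫ u in (1:ℝ)..zfun x y, psiRhoHat α ρ u) / (zfun x y - 1)^(α*ρ)) *
        ((x+1)/(x-y))^(α*ρ)
        - M * ((∫ u in (1:ℝ)..y, psiRhoHat α ρ u) / (y-1)^(α*ρ)) * K)) (𝓝[>] (1:ℝ))
        (𝓝 (C * ((x-1)^(α-1) * L * ((x+1)/(x-1))^(α*ρ) - M * L * K))) :=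
      ((((hA.mul hF).mul hR).sub ((hG.const_mul M).mul_const K)).const_mul C)
    have hEq : (fun y : ℝ => C * ((x-y)^(α-1) *
        ((∫ u in (1:ℝ)..zfun x y, psiRhoHat α ρ u) / (zfun x y - 1)^(α*ρ)) *
        ((x+1)/(x-y))^(α*ρ)
        - M * ((∫ u in (1:ℝ)..y, psiRhoHat α ρ u) / (y-1)^(α*ρ)) * K))
        =ᶠ[𝓝[>] (1:ℝ)] (fun y : ℝ => Ufun α ρ x y / (y-1)^(α*ρ)) := by
      filter_upwards [hmem] with y hy
      have hy1 : 1 < y := hy.1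
      have hxy : 0 < x - y := by linarith [hy.2]
      have h1y : (0:ℝ) < y - 1 := by linarith
      have hRpos : 0 < (x+1)/(x-y) := div_pos (by linarith) hxy
      have hyp : (0:ℝ) < (y-1)^(α*ρ) := Real.rpow_pos_of_pos h1y _
      have hRp : (0:ℝ) < ((x+1)/(x-y))^(α*ρ) := Real.rpow_pos_of_pos hRpos _
      have hzsub : zfun x y - 1 = (y-1)*((x+1)/(x-y)) := by rw [hzeq y hy]; ring
      have hzp : (zfun x y - 1)^(α*ρ) = (y-1)^(α*ρ) * ((x+1)/(x-y))^(α*ρ) := by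
        rw [hzsub, Real.mul_rpow h1y.le hRpos.le]
      rw [Ufun, if_pos hx1, hzp, ← hK, ← hM, ← hC]
      field_simp
    have hose := hNice.congr' hEq
    have hval : C * ((x-1)^(α-1) * L * ((x+1)/(x-1))^(α*ρ) - M * L * K)
        = v1fun α ρ x / cRho α ρ := by
      have hx0 : (0:ℝ) < x - 1 := by linarith
      have hx2 : (0:ℝ) < x + 1 := by linarith
      have e1 : ((x+1)/(x-1))^(α*ρ) = (x+1)^(α*ρ)/(x-1)^(α*ρ) :=
        Real.div_rpow (by linarith : (0:ℝ) ≤ x+1) (by linarith : (0:ℝ) ≤ x-1) (α*ρ)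
      have e2 : (x-1)^(α-1) / (x-1)^(α*ρ) = (x-1)^(α*(1-ρ)-1) := by
        rw [← Real.rpow_sub hx0]
        congr 1; ring
      have e4 : (x+1)^(α*ρ) = (x+1) * (x+1)^(α*ρ-1) := by
        rw [Real.rpow_sub hx2, Real.rpow_one]
        field_simp
      have harr : (x-1)^(α-1) * L * ((x+1)/(x-1))^(α*ρ)
          = L * ((x+1) * psiRho α ρ x) := by
        rw [e1, e4, psiRho, ← e2]
        have : (0:ℝ) < (x-1)^(α*ρ) := Real.rpow_pos_of_pos hx0 _
        field_simp
      rw [v1fun, if_pos hx1, ← hK]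
      have hcst := my_const α ρ hα0 hρ0 hρ1 hαρh
      rw [← hC, ← hL] at hcst
      calc C * ((x-1)^(α-1) * L * ((x+1)/(x-1))^(α*ρ) - M * L * K)
          = (C * L) * ((x+1) * psiRho α ρ x - M * K) := by rw [harr]; ring
        _ = Real.sin (π*(α*(1-ρ))) / cRho α ρ * ((x+1) * psiRho α ρ x - M * K) := by rw [hcst]
        _ = _ := by rw [div_mul_eq_mul_div]
    rwa [hval] at hose
  · -- case x < -1
    have hxm : x < -1 := by linarith
    have hnx : ¬ (1 < x) := by linarith
    have habs : |x| = -x := abs_of_neg (by linarith)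
    set K : ℝ := ∫ u in (1:ℝ)..|x|, psiRhoHat α ρ u with hK
    set S : ℝ := Real.sin (π*(α*ρ)) / Real.sin (π*(α*(1-ρ))) with hS
    have hmem : Ioo (1:ℝ) 2 ∈ 𝓝[>] (1:ℝ) := Ioo_mem_nhdsGT_of_mem ⟨le_refl 1, one_lt_two⟩
    have hzeq : ∀ y ∈ Ioo (1:ℝ) 2, zfun x y = 1 + (y-1)*((-x-1)/(y-x)) := by
      rintro y ⟨hy1, hy2⟩
      have h1 : x*y - 1 < 0 := by nlinarith
      have h2 : x - y < 0 := by linarith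
      rw [zfun, abs_of_neg h1, abs_of_neg h2, neg_sub, neg_sub]
      have hne : y - x ≠ 0 := by linarith
      field_simp
      ring
    have hzt : Tendsto (fun y => zfun x y) (𝓝[>] (1:ℝ)) (𝓝[>] (1:ℝ)) := by
      rw [tendsto_nhdsWithin_iff]
      constructor
      · have base : Tendsto (fun y : ℝ => 1 + (y-1)*((-x-1)/(y-x))) (𝓝[>] (1:ℝ)) (𝓝 1) := by
          have t1 : Tendsto (fun y : ℝ => y - 1) (𝓝 (1:ℝ)) (𝓝 0) := by
            have h0 : Tendsto (fun y : ℝ => y) (𝓝 (1:ℝ)) (𝓝 1) := tendsto_id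
            simpa using h0.sub (tendsto_const_nhds (x := (1:ℝ)))
          have t2 : Tendsto (fun y : ℝ => (-x-1)/(y-x)) (𝓝 (1:ℝ)) (𝓝 ((-x-1)/(1-x))) := by
            have h0 : Tendsto (fun y : ℝ => y - x) (𝓝 (1:ℝ)) (𝓝 (1-x)) :=
              tendsto_id.sub tendsto_const_nhds
            exact tendsto_const_nhds.div h0 (by linarith)
          have := (t1.mul t2).const_add (1:ℝ)
          simpa using this.mono_left nhdsWithin_le_nhds
        refine base.congr' ?_
        filter_upwards [hmem] with y hy
        exact (hzeq y hy).symm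
      · filter_upwards [hmem] with y hy
        rw [hzeq y hy]
        have h2 : 0 < y - x := by linarith [hy.1]
        have h3 : 0 < (y-1)*((-x-1)/(y-x)) := by
          apply mul_pos (by linarith [hy.1])
          apply div_pos (by linarith) h2
        show (1:ℝ) < 1 + (y-1)*((-x-1)/(y-x))
        linarith
    have hF : Tendsto (fun y : ℝ =>
        (∫ u in (1:ℝ)..zfun x y, psiRhoHat α ρ u) / (zfun x y - 1)^(α*ρ)) (𝓝[>] (1:ℝ)) (𝓝 L) :=
      hG.comp hzt
    have hA : Tendsto (fun y : ℝ => (y-x)^(α-1)) (𝓝[>] (1:ℝ)) (𝓝 ((1-x)^(α-1))) := by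
      have h0 : Tendsto (fun y : ℝ => y - x) (𝓝 (1:ℝ)) (𝓝 (1-x)) :=
        tendsto_id.sub tendsto_const_nhds
      exact (h0.rpow_const (Or.inl (by linarith))).mono_left nhdsWithin_le_nhds
    have hR : Tendsto (fun y : ℝ => ((-x-1)/(y-x))^(α*ρ)) (𝓝[>] (1:ℝ))
        (𝓝 (((-x-1)/(1-x))^(α*ρ))) := by
      have h0 : Tendsto (fun y : ℝ => y - x) (𝓝 (1:ℝ)) (𝓝 (1-x)) :=
        tendsto_id.sub tendsto_const_nhds
      have h1 : Tendsto (fun y : ℝ => (-x-1)/(y-x)) (𝓝 (1:ℝ)) (𝓝 ((-x-1)/(1-x))) :=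
        tendsto_const_nhds.div h0 (by linarith)
      have hne : (-x-1)/(1-x) ≠ 0 := by
        apply ne_of_gt; apply div_pos (by linarith) (by linarith)
      exact (h1.rpow_const (Or.inl hne)).mono_left nhdsWithin_le_nhds
    have hNice : Tendsto (fun y : ℝ => (S * C) * ((y-x)^(α-1) *
        ((∫ u in (1:ℝ)..zfun x y, psiRhoHat α ρ u) / (zfun x y - 1)^(α*ρ)) *
        ((-x-1)/(y-x))^(α*ρ)
        - M * ((∫ u in (1:ℝ)..y, psiRhoHat α ρ u) / (y-1)^(α*ρ)) * K)) (𝓝[>] (1:ℝ))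
        (𝓝 ((S * C) * ((1-x)^(α-1) * L * ((-x-1)/(1-x))^(α*ρ) - M * L * K))) :=
      ((((hA.mul hF).mul hR).sub ((hG.const_mul M).mul_const K)).const_mul (S * C))
    have hEq : (fun y : ℝ => (S * C) * ((y-x)^(α-1) *
        ((∫ u in (1:ℝ)..zfun x y, psiRhoHat α ρ u) / (zfun x y - 1)^(α*ρ)) *
        ((-x-1)/(y-x))^(α*ρ)
        - M * ((∫ u in (1:ℝ)..y, psiRhoHat α ρ u) / (y-1)^(α*ρ)) * K))
        =ᶠ[𝓝[>] (1:ℝ)] (fun y : ℝ => Ufun α ρ x y / (y-1)^(α*ρ)) := by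
      filter_upwards [hmem] with y hy
      have hy1 : 1 < y := hy.1
      have hxy : 0 < y - x := by linarith
      have h1y : (0:ℝ) < y - 1 := by linarith
      have hRpos : 0 < (-x-1)/(y-x) := div_pos (by linarith) hxy
      have hyp : (0:ℝ) < (y-1)^(α*ρ) := Real.rpow_pos_of_pos h1y _
      have hRp : (0:ℝ) < ((-x-1)/(y-x))^(α*ρ) := Real.rpow_pos_of_pos hRpos _
      have hzsub : zfun x y - 1 = (y-1)*((-x-1)/(y-x)) := by rw [hzeq y hy]; ring
      have hzp : (zfun x y - 1)^(α*ρ) = (y-1)^(α*ρ) * ((-x-1)/(y-x))^(α*ρ) := by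
        rw [hzsub, Real.mul_rpow h1y.le hRpos.le]
      rw [Ufun, if_neg hnx, hzp, ← hK, ← hM, ← hC, ← hS]
      field_simp
    have hose := hNice.congr' hEq
    have hval : (S * C) * ((1-x)^(α-1) * L * ((-x-1)/(1-x))^(α*ρ) - M * L * K)
        = v1fun α ρ x / cRho α ρ := by
      have hx0 : (0:ℝ) < 1 - x := by linarith
      have hx2 : (0:ℝ) < -x - 1 := by linarith
      have e1 : ((-x-1)/(1-x))^(α*ρ) = (-x-1)^(α*ρ)/(1-x)^(α*ρ) :=
        Real.div_rpow (by linarith : (0:ℝ) ≤ -x-1) (by linarith : (0:ℝ) ≤ 1-x) (α*ρ)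
      have e2 : (1-x)^(α-1) / (1-x)^(α*ρ) = (1-x)^(α*(1-ρ)-1) := by
        rw [← Real.rpow_sub hx0]
        congr 1; ring
      have e4 : (-x-1)^(α*ρ) = (-x-1) * (-x-1)^(α*ρ-1) := by
        rw [Real.rpow_sub hx2, Real.rpow_one]
        field_simp
      have hpsi : psiRhoHat α ρ (-x) = (-x-1)^(α*ρ-1) * (1-x)^(α*(1-ρ)-1) := by
        simp only [psiRhoHat]
        rw [show (-x + 1 : ℝ) = 1 - x by ring]
      have harr : (1-x)^(α-1) * L * ((-x-1)/(1-x))^(α*ρ)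
          = L * ((-x-1) * psiRhoHat α ρ (-x)) := by
        rw [e1, e4, hpsi, ← e2]
        have : (0:ℝ) < (1-x)^(α*ρ) := Real.rpow_pos_of_pos hx0 _
        field_simp
      rw [v1fun, if_neg hnx, ← hK, habs]
      have hcst := my_const α ρ hα0 hρ0 hρ1 hαρh
      rw [← hC, ← hL] at hcst
      have hsinhat : Real.sin (π*(α*(1-ρ))) ≠ 0 := by
        apply ne_of_gt
        apply Real.sin_pos_of_pos_of_lt_pi (mul_pos Real.pi_pos hs0)
        nlinarith [Real.pi_pos]
      have hcst2 : S * C * L = Real.sin (π*(α*ρ)) / cRho α ρ := by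
        rw [hS, mul_assoc, hcst]
        rw [div_mul_div_comm, mul_comm (Real.sin (π*(α*(1-ρ)))) (cRho α ρ), mul_div_mul_right _ _ hsinhat]
      calc (S*C) * ((1-x)^(α-1) * L * ((-x-1)/(1-x))^(α*ρ) - M * L * K)
          = (S * C * L) * ((-x-1) * psiRhoHat α ρ (-x) - M * K) := by rw [harr]; ring
        _ = Real.sin (π*(α*ρ)) / cRho α ρ * ((-x-1) * psiRhoHat α ρ (-x) - M * K) := by
            rw [hcst2]
        _ = _ := by rw [div_mul_eq_mul_div]
    rwa [hval] at hose
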